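/- For every finite word u over Σ that is a prefix of some word in K, there exists a finite word u' over {a, b, c, 1, 2, 3, 4, 5, 6} such that for every infinite word w over Σ, the word u·u'·w belongs to K if and only if w belongs to K. -/

import Mathlib

/-- The finite factor `w[m..n)` of the infinite word `w`, as a list. -/
def wordSegment {σ : Type} (w : ℕ → σ) (m n : ℕ) : List σ :=
  (List.range (n - m)).map fun i => w (m + i)

/-- `omegaPow X`: the infinite words that can be written as an infinite
concatenation of finite words, each belonging to `X`. -/
def omegaPow {σ : Type} (X : Set (List σ)) : Set (ℕ → σ) :=
  {w | ∃ φ : ℕ → ℕ, φ 0 = 0 ∧ StrictMono φ ∧ ∀ k, wordSegment w (φ k) (φ (k + 1)) ∈ X}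

/-- The alphabet `Σ = {a, b, c, 1, …, 6, r₁, …, r₆, y}` (with `num i` the digit
`i+1` and `res i` the reset letter `r_{i+1}`). -/
inductive Al : Type
  | a | b | c
  | num (i : Fin 6)
  | res (i : Fin 6)
  | y
deriving DecidableEq, Fintype

/-- The states of the classifier DFA. -/
inductive CSt : Type
  | p | q | t | s | r
  | ell (i : Fin 6)
deriving DecidableEq, Fintype

/-- The (partial) transition function of the classifier. A digit `num i` belongs
to `E = {1,2,3}` iff `i.val < 3`, and to `F = {4,5,6}` otherwise. -/
def clStep : CSt → Al → Option CSt
  | .p, .b => some .p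
  | .p, .num _ => some .p
  | .p, .y => some .p
  | .p, .a => some .q
  | .p, .c => some .t
  | .q, .a => some .q
  | .q, .num _ => some .p
  | .q, .y => some .p
  | .q, .b => some .r
  | .q, .c => some .s
  | .t, .c => some .t
  | .t, .b => some .p
  | .t, .a => some .q
  | .t, .num i => if i.val < 3 then some (.ell i) else some .p
  | .t, .y => some .p
  | .s, .c => some .s
  | .s, .b => some .r
  | .s, .a => some .q
  | .s, .num i => if i.val < 3 then some (.ell i) else some .p
  | .s, .y => some .p
  | .r, .b => some .r
  | .r, .a => some .q
  | .r, .c => some .s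
  | .r, .num i => if 3 ≤ i.val then some (.ell i) else some .p
  | .r, .y => some .p
  | _, _ => none

/-- The run of the classifier on a finite word, from a given state. -/
def clRun : CSt → List Al → Option CSt
  | c, [] => some c
  | c, l :: w =>
    match clStep c l with
    | some c' => clRun c' w
    | none => none

/-- The language `L_α` (for `α : Fin 6`, representing `L_{α+1}`): the finite
words whose run in the classifier from `p` is defined and ends in `ℓ_α`. -/
def Lcl (α : Fin 6) : Set (List Al) :=
  {w | clRun .p w = some (.ell α)}

/-- `L_main = (Σ^* ⋃_{α≠β} (L_α ∪ {r_α}) L_β L_β Σ^* y)^ω`. -/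
def LMain : Set (ℕ → Al) :=
  omegaPow {w | ∃ α β : Fin 6, α ≠ β ∧ ∃ u v₁ v₂ v₃ z : List Al,
    (v₁ ∈ Lcl α ∨ v₁ = [Al.res α]) ∧ v₂ ∈ Lcl β ∧ v₃ ∈ Lcl β ∧
    w = u ++ v₁ ++ v₂ ++ v₃ ++ z ++ [Al.y]}

/-- Prepend a finite word to an infinite word. -/
def prepend {σ : Type} : List σ → (ℕ → σ) → ℕ → σ
  | [], w => w
  | a :: u, w => fun n =>
    match n with
    | 0 => a
    | n + 1 => prepend u w n

/-- `K`: the infinite words over `Σ` that contain no reset letter and have no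
finite prefix in `L₁ ∪ ⋯ ∪ L₆`. -/
def Kmain : Set (ℕ → Al) :=
  {w | (∀ n, ∀ i : Fin 6, w n ≠ Al.res i) ∧ ∀ n, ∀ α : Fin 6, wordSegment w 0 n ∉ Lcl α}

theorem prepend_append' {σ : Type} (x y : List σ) (w : ℕ → σ) :
    prepend (x ++ y) w = prepend x (prepend y w) := by
  induction x with
  | nil => rfl
  | cons a x ih =>
    funext n
    cases n with
    | zero => rfl
    | succ n => show prepend (x ++ y) w n = prepend x (prepend y w) n; rw [ih]

theorem prepend_add' {σ : Type} (v : List σ) (w : ℕ → σ) (n : ℕ) :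
    prepend v w (v.length + n) = w n := by
  induction v with
  | nil => simp [prepend]
  | cons a v ih =>
    have h : (a :: v).length + n = (v.length + n) + 1 := by simp; omega
    rw [h]
    exact ih

theorem prepend_lt' {σ : Type} : ∀ (v : List σ) (n : ℕ) (h : n < v.length) (w : ℕ → σ),
    prepend v w n = v.get ⟨n, h⟩
  | a :: v, 0, _, w => rfl
  | a :: v, n+1, h, w => prepend_lt' v n (Nat.lt_of_succ_lt_succ h) w

theorem seg_succ' {σ : Type} (w : ℕ → σ) (n : ℕ) :
    wordSegment w 0 (n+1) = w 0 :: wordSegment (fun k => w (k+1)) 0 n := by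
  simp [wordSegment, List.range_succ_eq_map, List.map_map, Function.comp,
    Nat.succ_eq_add_one, Nat.add_comm]

theorem seg_prepend' {σ : Type} : ∀ (v : List σ) (w : ℕ → σ) (m : ℕ),
    wordSegment (prepend v w) 0 (v.length + m) = v ++ wordSegment w 0 m
  | [], w, m => by simp [wordSegment, prepend]
  | a :: v, w, m => by
    have h : (a :: v).length + m = (v.length + m) + 1 := by simp; omega
    rw [h, seg_succ']
    have h2 : (fun k => prepend (a :: v) w (k+1)) = prepend v w := rfl
    rw [h2, seg_prepend' v w m]
    rfl

theorem seg_take' {σ : Type} (v : List σ) (w : ℕ → σ) (n : ℕ) (h : n ≤ v.length) :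
    wordSegment (prepend v w) 0 n = v.take n := by
  have h2 : (v.take n).length = n := by simp [h]
  have h3 := seg_prepend' (v.take n) (prepend (v.drop n) w) 0
  rw [← prepend_append', List.take_append_drop, h2, Nat.add_zero] at h3
  have h4 : wordSegment (prepend (v.drop n) w) 0 0 = [] := by simp [wordSegment]
  rw [h4, List.append_nil] at h3
  exact h3

theorem clRun_append' : ∀ (x y : List Al) (c : CSt),
    clRun c (x ++ y) = (clRun c x).bind (fun c' => clRun c' y)
  | [], y, c => rfl
  | l :: x, y, c => by
    show clRun c (l :: (x ++ y)) = _
    cases h : clStep c l with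
    | none => simp [clRun, h]
    | some c' => simp [clRun, h, clRun_append' x y c']

theorem clStep_some' : ∀ c l, (∀ i : Fin 6, c ≠ CSt.ell i) → (∀ i : Fin 6, l ≠ Al.res i) →
    ∃ c', clStep c l = some c' := by decide

theorem clStep_ell' : ∀ (β : Fin 6) (l : Al), clStep (CSt.ell β) l = none := by decide

theorem clRun_ell' (β : Fin 6) (v : List Al) (c : CSt) (h : clRun (.ell β) v = some c) :
    c = .ell β := by
  cases v with
  | nil => exact (Option.some.inj h).symm
  | cons l rest => simp [clRun, clStep_ell'] at h

theorem run_reset' : ∀ c, (∀ α : Fin 6, c ≠ CSt.ell α) →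
    clRun c [Al.a, Al.num 3] = some CSt.p := by decide

theorem run_nonell' (u : List Al) (hres : ∀ l ∈ u, ∀ i : Fin 6, l ≠ Al.res i)
    (hpre : ∀ n (α : Fin 6), u.take n ∉ Lcl α) :
    ∃ c, clRun .p u = some c ∧ ∀ α : Fin 6, c ≠ .ell α := by
  induction u using List.reverseRecOn with
  | nil => exact ⟨.p, rfl, by decide⟩
  | append_singleton v l ih =>
    have hpre' : ∀ n (α : Fin 6), v.take n ∉ Lcl α := by
      intro n α h
      by_cases hn : n ≤ v.length
      · exact hpre n α (by rwa [List.take_append_of_le_length hn])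
      · rw [List.take_of_length_le (by omega)] at h
        exact hpre v.length α
          (by rwa [List.take_append_of_le_length le_rfl, List.take_length])
    obtain ⟨c, hc, hcne⟩ := ih (fun l' hl' => hres l' (by simp [hl'])) hpre'
    obtain ⟨c', hc'⟩ := clStep_some' c l hcne (hres l (by simp))
    have hrun : clRun .p (v ++ [l]) = some c' := by
      rw [clRun_append', hc]
      show clRun c [l] = some c'
      simp [clRun, hc']
    refine ⟨c', hrun, ?_⟩
    intro α hα
    apply hpre (v ++ [l]).length α
    rw [List.take_length]
    show clRun .p (v ++ [l]) = some (.ell α)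
    rw [hrun, hα]

/-- For every finite word `u` that is a prefix of some word of
`K`, there is a finite word `u'` over `{a, b, c, 1, …, 6}` such that appending
`u·u'` in front of an infinite word does not change membership in `K`. -/
theorem reset_word_for_K (u : List Al) (hu : ∃ w : ℕ → Al, prepend u w ∈ Kmain) :
    ∃ u' : List Al, (∀ l ∈ u', (∀ i : Fin 6, l ≠ Al.res i) ∧ l ≠ Al.y) ∧
      ∀ w : ℕ → Al, (prepend (u ++ u') w ∈ Kmain ↔ w ∈ Kmain) := by
  obtain ⟨w₀, hres₀, hpre₀⟩ := hu
  have hures : ∀ l ∈ u, ∀ i : Fin 6, l ≠ Al.res i := by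
    intro l hl i
    obtain ⟨n, hn, hget⟩ := List.mem_iff_getElem.mp hl
    have h1 := hres₀ n i
    rw [prepend_lt' u n hn w₀] at h1
    simpa [List.get_eq_getElem, hget] using h1
  have hupre : ∀ n (α : Fin 6), u.take n ∉ Lcl α := by
    intro n α h
    by_cases hn : n ≤ u.length
    · exact hpre₀ n α (by rwa [seg_take' u w₀ n hn])
    · rw [List.take_of_length_le (by omega)] at h
      exact hpre₀ u.length α (by rwa [seg_take' u w₀ u.length le_rfl, List.take_length])
  obtain ⟨c, hc, hcne⟩ := run_nonell' u hures hupre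
  refine ⟨[Al.a, Al.num 3], by decide, ?_⟩
  intro w
  set v := u ++ [Al.a, Al.num 3] with hv
  have hrunv : clRun .p v = some .p := by
    rw [hv, clRun_append', hc]
    exact run_reset' c hcne
  have hvres : ∀ l ∈ v, ∀ i : Fin 6, l ≠ Al.res i := by
    intro l hl
    rcases List.mem_append.mp hl with h | h
    · exact hures l h
    · intro i
      rcases List.mem_cons.mp h with h1 | h1
      · simp [h1]
      · rcases List.mem_cons.mp h1 with h2 | h2
        · simp [h2]
        · simp at h2
  constructor
  · rintro ⟨hres, hpre⟩
    constructor
    · intro n i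
      have h1 := hres (v.length + n) i
      rwa [prepend_add'] at h1
    · intro n α h
      apply hpre (v.length + n) α
      rw [seg_prepend']
      show clRun .p (v ++ wordSegment w 0 n) = some (.ell α)
      rw [clRun_append', hrunv]
      exact h
  · rintro ⟨hres, hpre⟩
    constructor
    · intro n i
      by_cases hn : n < v.length
      · rw [prepend_lt' v n hn w]
        exact hvres _ (List.get_mem v ⟨n, hn⟩) i
      · have h1 : n = v.length + (n - v.length) := by omega
        rw [h1, prepend_add']
        exact hres _ i
    · intro n α
      by_cases hn : n ≤ v.length
      · rw [seg_take' v w n hn]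
        intro h
        have h2 : clRun .p v = (clRun .p (v.take n)).bind fun c' => clRun c' (v.drop n) := by
          conv_lhs => rw [← List.take_append_drop n v]
          exact clRun_append' _ _ _
        have h3 : clRun .p (v.take n) = some (.ell α) := h
        rw [h3, hrunv] at h2
        have h4 : clRun (.ell α) (v.drop n) = some .p := h2.symm
        have h5 := clRun_ell' α (v.drop n) .p h4
        exact CSt.noConfusion h5
      · have h1 : n = v.length + (n - v.length) := by omega
        rw [h1, seg_prepend']
        intro h
        apply hpre (n - v.length) α
        have h2 : clRun .p (v ++ wordSegment w 0 (n - v.length)) = some (.ell α) := h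
        rw [clRun_append', hrunv] at h2
        exact h2
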